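/- If S is a t-almost-equiangular subset of the unit sphere S^{n-1} (every 3-element subset contains a pair with inner product t) with t ∈ [-1, 0], then |S| ≤ 2(n+1). -/

import Mathlib

open scoped RealInnerProductSpace

open Matrix in
private lemma trace_conj_pow {m : Type*} [Fintype m] [DecidableEq m] {A : Matrix m m ℝ}
    (hA : A.IsHermitian) (c : ℝ) (k : ℕ) :
    ((A - c • 1) ^ k).trace = ∑ i, (hA.eigenvalues i - c) ^ k := by
  set U : Matrix m m ℝ := (hA.eigenvectorUnitary : Matrix m m ℝ) with hUdef
  have h1 : U * star U = 1 := (Matrix.mem_unitaryGroup_iff).mp hA.eigenvectorUnitary.2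
  have h2 : star U * U = 1 := (Matrix.mem_unitaryGroup_iff').mp hA.eigenvectorUnitary.2
  have hspec : A = U * diagonal hA.eigenvalues * star U := by
    have := hA.spectral_theorem
    rwa [RCLike.ofReal_real_eq_id, Function.id_comp] at this
  have hD : A - c • 1 = U * diagonal (fun i => hA.eigenvalues i - c) * star U := by
    have hdiag : (diagonal (fun i => hA.eigenvalues i - c) : Matrix m m ℝ)
        = diagonal hA.eigenvalues - c • 1 := by
      rw [smul_one_eq_diagonal, ← diagonal_sub]
    rw [hdiag, Matrix.mul_sub, Matrix.sub_mul, Matrix.mul_smul, Matrix.smul_mul, mul_one, h1,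
      ← hspec]
  have hpow : (A - c • 1) ^ k = U * (diagonal (fun i => hA.eigenvalues i - c)) ^ k * star U := by
    induction k with
    | zero => simp [h1]
    | succ k ih =>
        rw [pow_succ, ih, hD, pow_succ]
        rw [Matrix.mul_assoc, Matrix.mul_assoc, ← Matrix.mul_assoc (star U),
          ← Matrix.mul_assoc (star U), h2, Matrix.one_mul]
        noncomm_ring
  rw [hpow, Matrix.mul_assoc, Matrix.trace_mul_comm, Matrix.mul_assoc, h2, Matrix.mul_one,
    diagonal_pow, Matrix.trace_diagonal]
  simp [Pi.pow_apply]

open Matrix in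
private lemma key_card_le {m : Type*} [Fintype m] [DecidableEq m] {A : Matrix m m ℝ} {d : ℕ}
    (hPSD : A.PosSemidef) (hrank : A.rank ≤ d)
    (hdiag : ∀ i, A i i = 1)
    (htri : ∀ i j k : m, (A - 1) i j * ((A - 1) j k * (A - 1) k i) = 0) :
    Fintype.card m ≤ 2 * d := by
  classical
  have hA : A.IsHermitian := hPSD.isHermitian
  set f : m → ℝ := hA.eigenvalues with hf
  have hfnn : ∀ i, 0 ≤ f i := hPSD.eigenvalues_nonneg
  set M : ℕ := Fintype.card m with hM
  -- trace of A is M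
  have htrA : A.trace = (M : ℝ) := by
    rw [Matrix.trace]
    simp [Matrix.diag, hdiag, hM]
  have s1 : ∑ i, f i = (M : ℝ) := by
    have := trace_conj_pow hA 0 1
    simpa [htrA] using this.symm
  -- trace of (A-1)^3 is 0
  have t3 : ((A - (1:ℝ) • 1) ^ 3).trace = 0 := by
    have hone : ((1:ℝ) • (1 : Matrix m m ℝ)) = 1 := one_smul _ _
    rw [hone, pow_three, Matrix.trace]
    rw [Finset.sum_eq_zero]
    intro i _
    show ((A - 1) * ((A - 1) * (A - 1))).diag i = 0
    rw [Matrix.diag_apply, Matrix.mul_apply]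
    apply Finset.sum_eq_zero
    intro j _
    rw [Matrix.mul_apply, Finset.mul_sum]
    apply Finset.sum_eq_zero
    intro k _
    exact htri i j k
  have s3 : ∑ i, (f i - 1) ^ 3 = 0 := by
    rw [← trace_conj_pow hA 1 3, t3]
  -- key summation identity
  have hsum : ∑ i, (f i ^ 3 - 3 * f i ^ 2 + 4) = 2 * (M : ℝ) := by
    have hrw : ∀ i ∈ Finset.univ, f i ^ 3 - 3 * f i ^ 2 + 4
        = ((f i - 1) ^ 3) - 3 * f i + 5 := by
      intro i _; ring
    rw [Finset.sum_congr rfl hrw]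
    rw [Finset.sum_add_distrib, Finset.sum_sub_distrib, s3, ← Finset.mul_sum, s1,
      Finset.sum_const, Finset.card_univ]
    push_cast [hM]
    ring
  -- nonzero eigenvalue count
  set F : Finset m := Finset.univ.filter (fun i => f i ≠ 0) with hF
  have hFcard : F.card ≤ d := by
    have h1 : A.rank = Fintype.card {i // f i ≠ 0} := hA.rank_eq_card_non_zero_eigs
    have h2 : Fintype.card {i // f i ≠ 0} = F.card := Fintype.card_subtype _
    rw [h1, h2] at hrank
    exact hrank
  have hterm : ∀ i, (0:ℝ) ≤ f i ^ 3 - 3 * f i ^ 2 + 4 := by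
    intro i
    nlinarith [hfnn i, sq_nonneg (f i - 2)]
  have hlow : (4:ℝ) * ((M : ℝ) - F.card) ≤ ∑ i, (f i ^ 3 - 3 * f i ^ 2 + 4) := by
    have hsub : Finset.univ \ F ⊆ Finset.univ := Finset.subset_univ _
    have hle : ∑ i ∈ Finset.univ \ F, (f i ^ 3 - 3 * f i ^ 2 + 4)
        ≤ ∑ i ∈ Finset.univ, (f i ^ 3 - 3 * f i ^ 2 + 4) :=
      Finset.sum_le_sum_of_subset_of_nonneg hsub (fun i _ _ => hterm i)
    have heq : ∑ i ∈ Finset.univ \ F, (f i ^ 3 - 3 * f i ^ 2 + 4)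
        = 4 * ((M : ℝ) - F.card) := by
      have : ∀ i ∈ Finset.univ \ F, f i ^ 3 - 3 * f i ^ 2 + 4 = 4 := by
        intro i hi
        rcases Finset.mem_sdiff.mp hi with ⟨-, hnot⟩
        have : f i = 0 := by
          by_contra h
          exact hnot (Finset.mem_filter.mpr ⟨Finset.mem_univ _, h⟩)
        rw [this]; norm_num
      have hFle : F.card ≤ M := by
        rw [hM]; exact Finset.card_le_univ F
      rw [Finset.sum_congr rfl this, Finset.sum_const]
      rw [Finset.card_sdiff_of_subset (Finset.subset_univ F), Finset.card_univ, ← hM,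
        nsmul_eq_mul, Nat.cast_sub hFle]
      ring
    linarith
  have hFleM : F.card ≤ M := by rw [hM]; exact Finset.card_le_univ F
  have : (M:ℝ) ≤ 2 * d := by
    have hFd : (F.card : ℝ) ≤ d := by exact_mod_cast hFcard
    linarith [hsum, hlow]
  exact_mod_cast this

open Matrix in
theorem almost_equiangular_card_le (n : ℕ) (t : ℝ) (ht : t ∈ Set.Icc (-1 : ℝ) 0)
    (S : Finset (EuclideanSpace ℝ (Fin n)))
    (hunit : ∀ x ∈ S, ‖x‖ = 1)
    (halmost : ∀ x ∈ S, ∀ y ∈ S, ∀ z ∈ S, x ≠ y → x ≠ z → y ≠ z →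
      ⟪x, y⟫ = t ∨ ⟪x, z⟫ = t ∨ ⟪y, z⟫ = t) :
    S.card ≤ 2 * (n + 1) := by
  classical
  obtain ⟨ht1, ht0⟩ := ht
  have h1t : (0:ℝ) < 1 - t := by linarith
  have hnt : (0:ℝ) ≤ -t := by linarith
  set c : ℝ := (Real.sqrt (1 - t))⁻¹ with hc
  set Y : Matrix (Fin (n+1)) {x // x ∈ S} ℝ :=
    fun i x => c * (if h : (i : ℕ) < n then (x : EuclideanSpace ℝ (Fin n)) ⟨(i : ℕ), h⟩
      else Real.sqrt (-t)) with hY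
  set A : Matrix {x // x ∈ S} {x // x ∈ S} ℝ := Yᴴ * Y with hA
  have hc2 : c * c = (1 - t)⁻¹ := by
    rw [hc, ← mul_inv]
    rw [Real.mul_self_sqrt (le_of_lt h1t)]
  -- entry formula
  have hentry : ∀ x y : {x // x ∈ S},
      A x y = (⟪(x : EuclideanSpace ℝ (Fin n)), (y : EuclideanSpace ℝ (Fin n))⟫ - t) / (1 - t) := by
    intro x y
    rw [hA, Matrix.mul_apply]
    have : ∀ i : Fin (n+1), Yᴴ x i * Y i y = Y i x * Y i y := by
      intro i; rw [Matrix.conjTranspose_apply, star_trivial]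
    rw [Finset.sum_congr rfl (fun i _ => this i)]
    rw [Fin.sum_univ_castSucc]
    have hlast : Y (Fin.last n) x * Y (Fin.last n) y = c * c * (-t) := by
      show (c * if h : (Fin.last n : ℕ) < n then (x : EuclideanSpace ℝ (Fin n)) ⟨_, h⟩
          else Real.sqrt (-t)) * (c * if h : (Fin.last n : ℕ) < n then
          (y : EuclideanSpace ℝ (Fin n)) ⟨_, h⟩ else Real.sqrt (-t)) = c * c * (-t)
      rw [dif_neg (by simp), dif_neg (by simp)]
      rw [show (c * Real.sqrt (-t)) * (c * Real.sqrt (-t))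
        = c * c * (Real.sqrt (-t) * Real.sqrt (-t)) by ring, Real.mul_self_sqrt hnt]
    have hcast : ∀ j : Fin n, Y (Fin.castSucc j) x * Y (Fin.castSucc j) y
        = c * c * ((x : EuclideanSpace ℝ (Fin n)) j * (y : EuclideanSpace ℝ (Fin n)) j) := by
      intro j
      rw [hY]
      simp only [Fin.coe_castSucc, j.isLt, dif_pos]
      rw [Fin.eta]
      ring
    rw [Finset.sum_congr rfl (fun j _ => hcast j), hlast, ← Finset.mul_sum]
    have hinner : ⟪(x : EuclideanSpace ℝ (Fin n)), (y : EuclideanSpace ℝ (Fin n))⟫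
        = ∑ j : Fin n, (x : EuclideanSpace ℝ (Fin n)) j * (y : EuclideanSpace ℝ (Fin n)) j := by
      rw [PiLp.inner_apply]
      simp [RCLike.inner_apply]
      exact Finset.sum_congr rfl (fun _ _ => mul_comm _ _)
    rw [← hinner, hc2]
    field_simp
    ring
  have hdiag : ∀ x : {x // x ∈ S}, A x x = 1 := by
    intro x
    rw [hentry x x]
    have : ⟪(x : EuclideanSpace ℝ (Fin n)), (x : EuclideanSpace ℝ (Fin n))⟫ = 1 := by
      rw [real_inner_self_eq_norm_sq, hunit x x.2]
      norm_num
    rw [this]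
    field_simp
  have htri : ∀ x y z : {x // x ∈ S},
      (A - 1) x y * ((A - 1) y z * (A - 1) z x) = 0 := by
    intro x y z
    have hoff : ∀ u v : {x // x ∈ S}, u ≠ v →
        (⟪(u : EuclideanSpace ℝ (Fin n)), (v : EuclideanSpace ℝ (Fin n))⟫ = t) →
        (A - 1) u v = 0 := by
      intro u v huv hinner
      rw [Matrix.sub_apply, hentry, hinner, Matrix.one_apply_ne huv]
      simp
    have hdiagB : ∀ u : {x // x ∈ S}, (A - 1) u u = 0 := by
      intro u
      rw [Matrix.sub_apply, hdiag, Matrix.one_apply_eq, sub_self]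
    by_cases hxy : x = y
    · subst hxy; rw [hdiagB]; ring
    · by_cases hyz : y = z
      · subst hyz; rw [hdiagB]; ring
      · by_cases hzx : z = x
        · subst hzx; rw [hdiagB]; ring
        · have hd := halmost x x.2 y y.2 z z.2
            (fun h => hxy (Subtype.ext h)) (fun h => hzx (Subtype.ext h.symm))
            (fun h => hyz (Subtype.ext h))
          rcases hd with h | h | h
          · rw [hoff x y hxy h]; ring
          · rw [hoff z x hzx (by rw [real_inner_comm]; exact h)]; ring
          · rw [hoff y z hyz h]; ring
  have hPSD : A.PosSemidef := Matrix.posSemidef_conjTranspose_mul_self Y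
  have hrank : A.rank ≤ n + 1 := by
    calc A.rank ≤ Yᴴ.rank := Matrix.rank_mul_le_left Yᴴ Y
    _ ≤ Fintype.card (Fin (n+1)) := by
        have := Matrix.rank_le_card_width Yᴴ
        simpa using this
    _ = n + 1 := by simp
  have := key_card_le hPSD hrank hdiag htri
  rwa [Fintype.card_coe] at this
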